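/- In the p-system with acoustic impedance c(p), the least squared wavespeed and residual for a single jump approximating a simple wave are exactly a_* = ±(β+1)/(2⟨1/c⟩) and R_* = [p]((β-1)/2)(±1, -1)^T, where β = ⟨1/c⟩²/⟨1/c²⟩ and [p] = p_b - p_a. In particular |R_*| = |[p](β-1)|/√2. -/

import Mathlib

lemma avg_inv_pos (c : ℝ → ℝ) (pa pb : ℝ) (hne : pa ≠ pb)
    (hc : ContinuousOn c (Set.uIcc pa pb))
    (hpos : ∀ p ∈ Set.uIcc pa pb, 0 < c p) :
    0 < (∫ p in pa..pb, 1 / c p) / (pb - pa) := by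
  have hcont : ContinuousOn (fun p => 1 / c p) (Set.uIcc pa pb) := by
    exact ContinuousOn.div continuousOn_const hc (fun p hp => (hpos p hp).ne')
  have hint : IntervalIntegrable (fun p => 1 / c p) MeasureTheory.volume pa pb :=
    hcont.intervalIntegrable
  rcases lt_or_gt_of_ne hne with h | h
  · have hI : 0 < ∫ p in pa..pb, 1 / c p := by
      apply intervalIntegral.intervalIntegral_pos_of_pos_on hint _ h
      intro x hx
      have : x ∈ Set.uIcc pa pb := by
        rw [Set.uIcc_of_le h.le]; exact Set.mem_Icc.2 ⟨hx.1.le, hx.2.le⟩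
      exact one_div_pos.2 (hpos x this)
    exact div_pos hI (by linarith)
  · have hint' : IntervalIntegrable (fun p => 1 / c p) MeasureTheory.volume pb pa :=
      hint.symm
    have hI : 0 < ∫ p in pb..pa, 1 / c p := by
      apply intervalIntegral.intervalIntegral_pos_of_pos_on hint' _ h
      intro x hx
      have : x ∈ Set.uIcc pa pb := by
        rw [Set.uIcc_of_ge h.le]; exact Set.mem_Icc.2 ⟨hx.1.le, hx.2.le⟩
      exact one_div_pos.2 (hpos x this)
    have : (∫ p in pa..pb, 1 / c p) = -∫ p in pb..pa, 1 / c p :=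
      intervalIntegral.integral_symm pb pa
    rw [this]
    apply div_pos_of_neg_of_neg (by linarith) (by linarith)

/-- For the p-system, the least squared wavespeed and residual of a single jump
approximating a simple wave are exactly `a_* = ±(β+1)/(2⟨1/c⟩)` and
`R_* = [p]((β-1)/2)(±1,-1)ᵀ`, with `|R_*| = |[p](β-1)|/√2`. -/
theorem psystem_least_square_residual (c : ℝ → ℝ) (pa pb : ℝ) (hne : pa ≠ pb)
    (hc : ContinuousOn c (Set.uIcc pa pb))
    (hpos : ∀ p ∈ Set.uIcc pa pb, 0 < c p)
    (ε : ℝ) (hε : ε = 1 ∨ ε = -1) :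
    let avg : (ℝ → ℝ) → ℝ := fun g => (∫ p in pa..pb, g p) / (pb - pa)
    let β := (avg (fun p => 1 / c p))^2 / avg (fun p => 1 / (c p)^2)
    let jp := pb - pa
    let R : ℝ → Fin 2 → ℝ := fun a =>
      ![jp * (ε * β - a * avg (fun p => 1 / c p)),
        jp * (1 - a * avg (fun p => 1 / c p) * ε)]
    let astar := ε * (β + 1) / (2 * avg (fun p => 1 / c p))
    (∀ a : ℝ, Real.sqrt ((R astar 0)^2 + (R astar 1)^2)
        ≤ Real.sqrt ((R a 0)^2 + (R a 1)^2)) ∧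
    (R astar 0 = jp * ((β - 1)/2) * ε ∧ R astar 1 = -(jp * ((β - 1)/2))) ∧
    Real.sqrt ((R astar 0)^2 + (R astar 1)^2) = |jp * (β - 1)| / Real.sqrt 2 := by
  intro avg β jp R astar
  have hm : 0 < avg (fun p => 1 / c p) := avg_inv_pos c pa pb hne hc hpos
  set m := avg (fun p => 1 / c p) with hmdef
  have hε2 : ε ^ 2 = 1 := by rcases hε with h | h <;> rw [h] <;> ring
  have hastar : astar * m = ε * (β + 1) / 2 := by
    show ε * (β + 1) / (2 * m) * m = _
    field_simp
  have hR0 : R astar 0 = jp * ((β - 1)/2) * ε := by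
    show jp * (ε * β - astar * m) = _
    rw [hastar]; ring
  have hR1 : R astar 1 = -(jp * ((β - 1)/2)) := by
    show jp * (1 - astar * m * ε) = _
    rw [hastar]
    rcases hε with h | h <;> subst h <;> ring
  have hsq : (R astar 0)^2 + (R astar 1)^2 = (jp * (β - 1))^2 / 2 := by
    rw [hR0, hR1]
    rcases hε with h | h <;> subst h <;> ring
  refine ⟨?_, ⟨hR0, hR1⟩, ?_⟩
  · intro a
    apply Real.sqrt_le_sqrt
    have hRa0 : R a 0 = jp * (ε * β - a * m) := rfl
    have hRa1 : R a 1 = jp * (1 - a * m * ε) := rfl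
    rw [hsq, hRa0, hRa1]
    rcases hε with h | h <;> subst h <;>
      nlinarith [sq_nonneg (jp * (a * m - (β + 1) / 2)), sq_nonneg (jp * (a * m + (β + 1) / 2))]
  · rw [hsq]
    rw [div_eq_mul_inv, Real.sqrt_mul (sq_nonneg _), Real.sqrt_sq_eq_abs]
    rw [Real.sqrt_inv, div_eq_mul_inv]
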